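/- If w = w_1 w_2 ⋯ w_n is a contre-lattice word and we transpose an adjacent pair w_i w_{i+1} with w_i < w_{i+1}, then the resulting word is still contre-lattice. -/

import Mathlib

open scoped Classical

/-! ## Words -/

def maxLetter (w : List ℕ) : ℕ := w.foldr max 0

def ContreUpTo (r : ℕ) (w : List ℕ) : Prop :=
  ∀ i j : ℕ, 1 < j → j ≤ r → (w.take i).count (j - 1) ≤ (w.take i).count j

def IsContreLattice (w : List ℕ) : Prop := ContreUpTo (maxLetter w) w

def IsRegularContreLattice (w : List ℕ) : Prop :=
  IsContreLattice w ∧ (∀ x ∈ w, 1 ≤ x) ∧ 1 ∈ w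

def IsLatticeWord (w : List ℕ) : Prop :=
  ∀ i j : ℕ, 1 ≤ j → (w.take i).count (j + 1) ≤ (w.take i).count j

/-! ## Skyline fillings -/

structure SkylineFilling (n : ℕ) where
  shape : Fin n → ℕ
  inner : Fin n → ℕ
  basement : Fin n → ℕ
  entry : Fin n → ℕ → ℕ

namespace SkylineFilling

variable {n : ℕ}

def Inversion (a b c : ℕ) : Prop := (b < a ∧ a ≤ c) ∨ (a ≤ c ∧ c < b)

def IsSSK (F : SkylineFilling n) : Prop :=
  (∀ i, F.inner i ≤ F.shape i) ∧
  (∀ i : Fin n, ∀ k : ℕ, k ≤ F.inner i → F.entry i k = F.basement i) ∧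
  (∀ i : Fin n, F.entry i 0 = F.basement i) ∧
  (∀ i : Fin n, ∀ k : ℕ, k + 1 ≤ F.shape i → F.entry i (k + 1) ≤ F.entry i k) ∧
  (∀ i j : Fin n, ∀ k : ℕ, i < j → F.shape j ≤ F.shape i → 1 ≤ k → k ≤ F.shape j →
      Inversion (F.entry i k) (F.entry j k) (F.entry i (k - 1))) ∧
  (∀ i j : Fin n, ∀ k : ℕ, i < j → F.shape i < F.shape j → k ≤ F.shape i → k + 1 ≤ F.shape j →
      Inversion (F.entry j (k + 1)) (F.entry i k) (F.entry j k))

def EntriesIn (F : SkylineFilling n) (m : ℕ) : Prop :=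
  ∀ i : Fin n, ∀ k : ℕ, F.inner i < k → k ≤ F.shape i →
    1 ≤ F.entry i k ∧ F.entry i k ≤ m

def Normalized (F : SkylineFilling n) : Prop :=
  ∀ i : Fin n, ∀ k : ℕ, F.shape i < k → F.entry i k = 0

def colList (F : SkylineFilling n) (k : ℕ) : List ℕ :=
  (List.finRange n).filterMap fun i =>
    if F.inner i < k ∧ k ≤ F.shape i then some (F.entry i k) else none

def width (F : SkylineFilling n) : ℕ := Finset.univ.sup F.shape

def colWord (F : SkylineFilling n) : List ℕ :=
  ((List.range F.width).reverse.map fun k => F.colList (k + 1)).flatten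

def looseWord (F : SkylineFilling n) : List ℕ :=
  ((List.range F.width).reverse.map fun k =>
    List.insertionSort (· ≥ ·) (F.colList (k + 1))).flatten

def colSet (F : SkylineFilling n) (k : ℕ) : Finset ℕ := (F.colList k).toFinset

def rowWord (F : SkylineFilling n) : List ℕ :=
  ((List.finRange n).reverse.map fun i =>
    (List.range (F.shape i - F.inner i)).map fun t => F.entry i (F.inner i + 1 + t)).flatten

def count (F : SkylineFilling n) (v : ℕ) : ℕ := F.rowWord.count v

/-- The content of `F` is `lam*`, the reverse of the partition `lam` (which has `r` parts). -/
def ContentRev (F : SkylineFilling n) (lam : ℕ → ℕ) (r : ℕ) : Prop :=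
  ∀ v : ℕ, F.count v = if 1 ≤ v ∧ v ≤ r then lam (r - v) else 0

end SkylineFilling

/-! ## Fillings of Ferrers shapes (CT and SSYT) -/

structure Filling (n : ℕ) where
  shape : Fin n → ℕ
  entry : Fin n → ℕ → ℕ

namespace Filling

variable {n : ℕ}

def IsCT (F : Filling n) (m : ℕ) : Prop :=
  (∀ i j : Fin n, i ≤ j → F.shape j ≤ F.shape i) ∧
  (∀ i : Fin n, ∀ k : ℕ, 1 ≤ k → k + 1 ≤ F.shape i → F.entry i (k + 1) ≤ F.entry i k) ∧
  (∀ i j : Fin n, ∀ k : ℕ, i < j → 1 ≤ k → k ≤ F.shape j → F.entry j k < F.entry i k) ∧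
  (∀ i : Fin n, ∀ k : ℕ, 1 ≤ k → k ≤ F.shape i → 1 ≤ F.entry i k ∧ F.entry i k ≤ m) ∧
  (∀ i : Fin n, ∀ k : ℕ, k = 0 ∨ F.shape i < k → F.entry i k = 0)

def IsSSYT (F : Filling n) (m : ℕ) : Prop :=
  (∀ i j : Fin n, i ≤ j → F.shape j ≤ F.shape i) ∧
  (∀ i : Fin n, ∀ k : ℕ, 1 ≤ k → k + 1 ≤ F.shape i → F.entry i k ≤ F.entry i (k + 1)) ∧
  (∀ i j : Fin n, ∀ k : ℕ, i < j → 1 ≤ k → k ≤ F.shape j → F.entry i k < F.entry j k) ∧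
  (∀ i : Fin n, ∀ k : ℕ, 1 ≤ k → k ≤ F.shape i → 1 ≤ F.entry i k ∧ F.entry i k ≤ m) ∧
  (∀ i : Fin n, ∀ k : ℕ, k = 0 ∨ F.shape i < k → F.entry i k = 0)

def word (F : Filling n) : List ℕ :=
  ((List.finRange n).map fun i =>
    (List.range (F.shape i)).map fun t => F.entry i (t + 1)).flatten

def count (F : Filling n) (v : ℕ) : ℕ := F.word.count v

def colList (F : Filling n) (k : ℕ) : List ℕ :=
  (List.finRange n).filterMap fun i =>
    if 1 ≤ k ∧ k ≤ F.shape i then some (F.entry i k) else none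

def ContentRev (F : Filling n) (lam : ℕ → ℕ) (r : ℕ) : Prop :=
  ∀ v : ℕ, F.count v = if 1 ≤ v ∧ v ≤ r then lam (r - v) else 0

end Filling

/-! ## Generating polynomials -/

noncomputable def schurPoly (n : ℕ) (lam : ℕ → ℕ) : MvPolynomial (Fin n) ℤ :=
  ∑ μ ∈ Finset.Nat.antidiagonalTuple n (∑ i ∈ Finset.range n, lam i),
    (Nat.card {T : Filling n // T.shape = (fun i => lam i.val) ∧ T.IsSSYT n ∧
        ∀ v : Fin n, T.count (v.val + 1) = μ v}) •
      MvPolynomial.monomial (Finsupp.equivFunOnFinite.symm μ) (1 : ℤ)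

noncomputable def atomPoly (n : ℕ) (γ : Fin n → ℕ) : MvPolynomial (Fin n) ℤ :=
  ∑ μ ∈ Finset.Nat.antidiagonalTuple n (∑ i, γ i),
    (Nat.card {F : SkylineFilling n // F.shape = γ ∧ F.inner = (fun _ => 0) ∧
        F.basement = (fun i : Fin n => (i : ℕ) + 1) ∧ F.IsSSK ∧ F.EntriesIn n ∧ F.Normalized ∧
        ∀ v : Fin n, F.count (v.val + 1) = μ v}) •
      MvPolynomial.monomial (Finsupp.equivFunOnFinite.symm μ) (1 : ℤ)

noncomputable def qsPoly (n : ℕ) (α : List ℕ) : MvPolynomial (Fin n) ℤ :=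
  ∑ γ ∈ (Finset.Nat.antidiagonalTuple n α.sum).filter
      (fun γ => (List.ofFn γ).filter (· != 0) = α),
    atomPoly n γ

noncomputable def charPoly (n : ℕ) (γ : Fin n → ℕ) : MvPolynomial (Fin n) ℤ :=
  ∑ μ ∈ Finset.Nat.antidiagonalTuple n (∑ i, γ i),
    (Nat.card {F : SkylineFilling n // F.shape = (fun i => γ i.rev) ∧ F.inner = (fun _ => 0) ∧
        F.basement = (fun i : Fin n => n - (i : ℕ)) ∧ F.IsSSK ∧ F.EntriesIn n ∧ F.Normalized ∧
        ∀ v : Fin n, F.count (v.val + 1) = μ v}) •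
      MvPolynomial.monomial (Finsupp.equivFunOnFinite.symm μ) (1 : ℤ)

noncomputable def lrsCount (n : ℕ) (γ δ : Fin n → ℕ) (lam : ℕ → ℕ) (r : ℕ) : ℕ :=
  Nat.card {F : SkylineFilling n // F.shape = δ ∧ F.inner = γ ∧
    F.basement = (fun i : Fin n => 2 * n - (i : ℕ)) ∧ F.IsSSK ∧ F.EntriesIn n ∧ F.Normalized ∧
    IsRegularContreLattice F.colWord ∧ F.ContentRev lam r}

noncomputable def lrkCount (n : ℕ) (γ δ : Fin n → ℕ) (lam : ℕ → ℕ) (r : ℕ) : ℕ :=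
  Nat.card {F : SkylineFilling n // F.shape = (fun i => δ i.rev) ∧
    F.inner = (fun i => γ i.rev) ∧
    F.basement = (fun i : Fin n => n + 1 + (i : ℕ)) ∧ F.IsSSK ∧ F.EntriesIn n ∧ F.Normalized ∧
    IsRegularContreLattice F.colWord ∧ F.ContentRev lam r}

noncomputable def lrcCount (n : ℕ) (αl βl : List ℕ) (lam : ℕ → ℕ) (r : ℕ) : ℕ :=
  Nat.card (Quot (fun (L₁ L₂ : {F : SkylineFilling n //
      F.basement = (fun i : Fin n => 2 * n - (i : ℕ)) ∧ F.IsSSK ∧ F.EntriesIn n ∧ F.Normalized ∧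
      IsRegularContreLattice F.colWord ∧ F.ContentRev lam r ∧
      (List.ofFn F.shape).filter (· != 0) = βl ∧
      (List.ofFn F.inner).filter (· != 0) = αl}) =>
    ∀ k : ℕ, L₁.1.colSet k = L₂.1.colSet k))

def IsRemComp (a b : List ℕ) (k : ℕ) : Prop :=
  ∃ u v : List ℕ, b = u ++ k :: v ∧ k ∉ v ∧
    a = u ++ (if k = 1 then v else (k - 1) :: v)


lemma maxLetter_swap (u v : List ℕ) (a b : ℕ) :
    maxLetter (u ++ b :: a :: v) = maxLetter (u ++ a :: b :: v) := by
  induction u with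
  | nil =>
    simp only [maxLetter, List.nil_append, List.foldr_cons]
    rw [← max_assoc, ← max_assoc, max_comm b a]
  | cons x t ih =>
    simp only [maxLetter, List.cons_append, List.foldr_cons] at ih ⊢
    rw [ih]

theorem stmt0 (u v : List ℕ) (a b : ℕ) (hab : a < b)
    (h : IsContreLattice (u ++ a :: b :: v)) :
    IsContreLattice (u ++ b :: a :: v) := by
  have hmax := maxLetter_swap u v a b
  have hperm : ∀ i, i ≠ u.length + 1 →
      ((u ++ b :: a :: v).take i).Perm ((u ++ a :: b :: v).take i) := by
    intro i hi
    rcases le_or_gt i u.length with hle | hlt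
    · rw [List.take_append_of_le_length hle, List.take_append_of_le_length hle]
    · have h2 : u.length + 2 ≤ i := by omega
      rw [List.take_append, List.take_append]
      refine List.Perm.append_left _ ?_
      have : i - u.length = (i - u.length - 2) + 2 := by omega
      rw [this]
      simp only [List.take_succ_cons]
      exact List.Perm.swap _ _ _
  intro i j hj hjr
  rw [hmax] at hjr
  by_cases hi : i = u.length + 1
  · subst hi
    have ht1 : (u ++ b :: a :: v).take (u.length + 1) = u ++ [b] := by
      rw [List.take_append, List.take_of_length_le (by omega)]
      simp
    have ht0 : (u ++ a :: b :: v).take u.length = u := List.take_left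
    have ht2 : (u ++ a :: b :: v).take (u.length + 2) = u ++ [a, b] := by
      rw [List.take_append, List.take_of_length_le (by omega)]
      simp
    have h0 := h u.length j hj hjr
    have h2 := h (u.length + 2) j hj hjr
    rw [ht0] at h0
    rw [ht2] at h2
    rw [ht1]
    simp only [List.count_append, List.count_cons, List.count_nil] at h2 ⊢
    simp only [beq_iff_eq] at h2 ⊢
    split_ifs at h2 ⊢ <;> omega
  · have := (hperm i hi).count_eq
    rw [this, this]
    exact h i j hj hjr
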